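/- Let s > 0. Let P be a random variable uniform on {0, 1} and let (S_k)_{k≥1} be a sequence of random variables, each uniform on {−1, 1}, with P and all the S_k mutually independent. Define the stochastic process a : ℕ → ℝ by a(t) = s·S_{(t+P+1)/2} if t + P is odd, and a(t) = 0 if t + P is even, and set δ(t) = a(t+1) − a(t). Then for every t ∈ ℕ: (i) E[δ(t)·δ(t+1)] = −s²/2, and (ii) E[δ(t)·δ(t+k)] = 0 for every integer k ≥ 2. -/

import Mathlib

open MeasureTheory ProbabilityTheory
open scoped ENNReal

/-- The stationary three-state oscillation process: with `P` uniform on `{0,1}`, `(S_k)`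
uniform on `{−1,1}`, all mutually independent, and
`a(t) = s·S_{(t+P+1)/2}` if `t+P` is odd, `a(t) = 0` otherwise, the increments
`δ(t) = a(t+1) − a(t)` satisfy `E[δ(t)·δ(t+1)] = −s²/2` and `E[δ(t)·δ(t+k)] = 0` for `k ≥ 2`. -/
theorem stmt_17 {Ω : Type*} [MeasurableSpace Ω] (μ : Measure Ω) [IsProbabilityMeasure μ]
    (s : ℝ) (hs : 0 < s)
    (P : Ω → ℕ) (S : ℕ → Ω → ℝ)
    (hPmeas : Measurable P) (hSmeas : ∀ k, Measurable (S k))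
    (hPval : ∀ ω, P ω = 0 ∨ P ω = 1)
    (hPunif : μ {ω | P ω = 0} = 1/2)
    (hSval : ∀ k, ∀ ω, S k ω = 1 ∨ S k ω = -1)
    (hSunif : ∀ k, μ {ω | S k ω = 1} = 1/2)
    (hindep : iIndepFun
      (β := fun o : Option ℕ => match o with | none => ℕ | some _ => ℝ)
      (m := fun o => match o with
        | none => (inferInstance : MeasurableSpace ℕ)
        | some _ => (inferInstance : MeasurableSpace ℝ))
      (fun o => match o with
        | none => P
        | some k => S k) μ)
    (a : ℕ → Ω → ℝ)
    (ha : ∀ t ω, a t ω = if Odd (t + P ω) then s * S ((t + P ω + 1) / 2) ω else 0)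
    (δ : ℕ → Ω → ℝ) (hδ : ∀ t ω, δ t ω = a (t + 1) ω - a t ω) :
    ∀ t : ℕ,
      (∫ ω, δ t ω * δ (t + 1) ω ∂μ = -(s ^ 2) / 2) ∧
      (∀ k : ℕ, 2 ≤ k → ∫ ω, δ t ω * δ (t + k) ω ∂μ = 0) := by
  classical
  have hmP : ∀ p : ℕ, MeasurableSet {ω | P ω = p} := fun p =>
    hPmeas (measurableSet_singleton p)
  have hmS : ∀ (i : ℕ) (x : ℝ), MeasurableSet {ω | S i ω = x} := fun i x =>
    (hSmeas i) (measurableSet_singleton x)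
  -- μ {P = 1} = 1/2
  have hP1 : μ {ω | P ω = 1} = 1/2 := by
    have hunion : {ω | P ω = 0} ∪ {ω | P ω = 1} = Set.univ := by
      ext ω; simpa using hPval ω
    have hdisj : Disjoint {ω | P ω = 0} {ω | P ω = 1} := by
      rw [Set.disjoint_left]; intro ω h0 h1
      simp only [Set.mem_setOf_eq] at h0 h1; omega
    have hsum := measure_union (μ := μ) hdisj (hmP 1)
    rw [hunion, measure_univ, hPunif] at hsum
    have h12 : (1:ℝ≥0∞)/2 + μ {ω | P ω = 1} = 1/2 + 1/2 := by
      rw [ENNReal.add_halves]; exact hsum.symm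
    exact (ENNReal.add_right_inj (by norm_num)).mp h12
  -- μ {S i = -1} = 1/2
  have hSneg : ∀ i : ℕ, μ {ω | S i ω = -1} = 1/2 := by
    intro i
    have hunion : {ω | S i ω = 1} ∪ {ω | S i ω = -1} = Set.univ := by
      ext ω; simpa using hSval i ω
    have hdisj : Disjoint {ω | S i ω = 1} {ω | S i ω = -1} := by
      rw [Set.disjoint_left]; intro ω h0 h1
      simp only [Set.mem_setOf_eq] at h0 h1; rw [h0] at h1; norm_num at h1
    have hsum := measure_union (μ := μ) hdisj (hmS i (-1))
    rw [hunion, measure_univ, hSunif] at hsum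
    have h12 : (1:ℝ≥0∞)/2 + μ {ω | S i ω = -1} = 1/2 + 1/2 := by
      rw [ENNReal.add_halves]; exact hsum.symm
    exact (ENNReal.add_right_inj (by norm_num)).mp h12
  -- atom measures from independence
  have hatom : ∀ (p i j : ℕ), i ≠ j → ∀ (x y : ℝ),
      μ ({ω | P ω = p} ∩ ({ω | S i ω = x} ∩ {ω | S j ω = y}))
        = μ {ω | P ω = p} * (μ {ω | S i ω = x} * μ {ω | S j ω = y}) := by
    intro p i j hij x y
    have key := hindep.measure_inter_preimage_eq_mul
      ({none, some i, some j} : Finset (Option ℕ))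
      (sets := fun o => match o with
        | none => ({p} : Set ℕ)
        | some m => if m = i then ({x} : Set ℝ) else if m = j then ({y} : Set ℝ) else Set.univ)
      (by
        intro o _
        cases o with
        | none => exact measurableSet_singleton _
        | some m =>
          dsimp only
          split
          · exact measurableSet_singleton _
          · split
            · exact measurableSet_singleton _
            · exact MeasurableSet.univ)
    have hnn : (none : Option ℕ) ∉ ({some i, some j} : Finset (Option ℕ)) := by simp
    have hni : (some i : Option ℕ) ∉ ({some j} : Finset (Option ℕ)) := by simp [hij]
    rw [Finset.prod_insert hnn, Finset.prod_insert hni, Finset.prod_singleton] at key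
    simp only [Finset.set_biInter_insert, Finset.set_biInter_singleton] at key
    simp only [if_pos rfl, if_neg (Ne.symm hij)] at key
    exact key
  -- integral of indicator with distinct S-indices is zero
  have hIzero : ∀ (c : ℝ) (p i j : ℕ), i ≠ j →
      ∫ ω, ({ω' | P ω' = p}.indicator (fun ω => c * (S i ω * S j ω))) ω ∂μ = 0 := by
    intro c p i j hij
    set A : ℝ → ℝ → Set Ω := fun x y =>
      {ω | P ω = p} ∩ ({ω | S i ω = x} ∩ {ω | S j ω = y}) with hA
    have hAm : ∀ x y, MeasurableSet (A x y) := fun x y =>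
      (hmP p).inter ((hmS i x).inter (hmS j y))
    have hpt : ∀ ω, ({ω' | P ω' = p}.indicator (fun ω => c * (S i ω * S j ω))) ω
        = ((A 1 1).indicator (fun _ => c) ω + (A (-1) (-1)).indicator (fun _ => c) ω)
          + ((A 1 (-1)).indicator (fun _ => -c) ω + (A (-1) 1).indicator (fun _ => -c) ω) := by
      intro ω
      by_cases hp : P ω = p
      · rcases hSval i ω with hx | hx <;> rcases hSval j ω with hy | hy <;>
          norm_num [Set.indicator_apply, hA, Set.mem_inter_iff, Set.mem_setOf_eq, hp, hx, hy]
      · simp [Set.indicator_apply, hA, Set.mem_inter_iff, Set.mem_setOf_eq, hp]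
    have hint : ∀ (x y : ℝ) (e : ℝ), Integrable ((A x y).indicator (fun _ => e)) μ :=
      fun x y e => (integrable_const e).indicator (hAm x y)
    have hμA : ∀ x y : ℝ, (x = 1 ∨ x = -1) → (y = 1 ∨ y = -1) →
        μ (A x y) = μ {ω | P ω = p} * (1/2 * (1/2)) := by
      intro x y hx hy
      rw [hA]
      rw [hatom p i j hij x y]
      rcases hx with rfl | rfl <;> rcases hy with rfl | rfl <;>
        simp only [hSunif, hSneg]
    have hf1 : Integrable (fun ω => (A 1 1).indicator (fun _ => c) ω) μ := hint 1 1 c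
    have hf2 : Integrable (fun ω => (A (-1) (-1)).indicator (fun _ => c) ω) μ := hint (-1) (-1) c
    have hf3 : Integrable (fun ω => (A 1 (-1)).indicator (fun _ => -c) ω) μ := hint 1 (-1) (-c)
    have hf4 : Integrable (fun ω => (A (-1) 1).indicator (fun _ => -c) ω) μ := hint (-1) 1 (-c)
    have hf12 : Integrable (fun ω => (A 1 1).indicator (fun _ => c) ω
        + (A (-1) (-1)).indicator (fun _ => c) ω) μ := hf1.add hf2
    have hf34 : Integrable (fun ω => (A 1 (-1)).indicator (fun _ => -c) ω
        + (A (-1) 1).indicator (fun _ => -c) ω) μ := hf3.add hf4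
    simp only [hpt]
    rw [integral_add hf12 hf34,
      integral_add hf1 hf2,
      integral_add hf3 hf4,
      integral_indicator_const c (hAm 1 1), integral_indicator_const c (hAm (-1) (-1)),
      integral_indicator_const (-c) (hAm 1 (-1)), integral_indicator_const (-c) (hAm (-1) 1),
      measureReal_def, measureReal_def, measureReal_def, measureReal_def,
      hμA 1 1 (by norm_num) (by norm_num), hμA (-1) (-1) (by norm_num) (by norm_num),
      hμA 1 (-1) (by norm_num) (by norm_num), hμA (-1) 1 (by norm_num) (by norm_num)]
    simp only [smul_eq_mul]
    ring
  -- integral of indicator with equal S-indices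
  have hIone : ∀ (c : ℝ) (p i : ℕ), μ {ω | P ω = p} = 1/2 →
      ∫ ω, ({ω' | P ω' = p}.indicator (fun ω => c * (S i ω * S i ω))) ω ∂μ = c / 2 := by
    intro c p i hp
    have hpt : ∀ ω, ({ω' | P ω' = p}.indicator (fun ω => c * (S i ω * S i ω))) ω
        = ({ω' | P ω' = p}.indicator (fun _ => c)) ω := by
      intro ω
      rcases hSval i ω with hx | hx <;> simp [Set.indicator_apply, hx]
    simp only [hpt]
    rw [integral_indicator_const c (hmP p), measureReal_def, hp]
    rw [smul_eq_mul]
    norm_num [ENNReal.toReal_div]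
    ring
  -- integrability of the indicator summands
  have hIntd : ∀ (c : ℝ) (p i j : ℕ),
      Integrable (fun ω => ({ω' | P ω' = p}.indicator
        (fun ω => c * (S i ω * S j ω))) ω) μ := by
    intro c p i j
    have hmeas : Measurable (fun ω => ({ω' | P ω' = p}.indicator
        (fun ω => c * (S i ω * S j ω))) ω) :=
      Measurable.indicator (measurable_const.mul ((hSmeas i).mul (hSmeas j))) (hmP p)
    refine (integrable_const |c|).mono' hmeas.aestronglyMeasurable ?_
    filter_upwards with ω
    by_cases hp : P ω = p
    · rcases hSval i ω with hx | hx <;> rcases hSval j ω with hy | hy <;>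
        norm_num [Set.indicator_apply, Set.mem_setOf_eq, hp, hx, hy, Real.norm_eq_abs,
          abs_le, le_abs_self, neg_abs_le]
    · simp [Set.indicator_apply, Set.mem_setOf_eq, hp, abs_nonneg]
  -- explicit formula for δ
  have hδ' : ∀ (u : ℕ) (ω : Ω),
      δ u ω = (if Even (u + P ω) then (1:ℝ) else -1) * (s * S ((u + P ω) / 2 + 1) ω) := by
    intro u ω
    rw [hδ, ha, ha]
    have h1 : u + 1 + P ω = (u + P ω) + 1 := by omega
    rw [h1]
    rcases Nat.even_or_odd (u + P ω) with h | h
    · obtain ⟨m, hm⟩ := h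
      have he : Even (u + P ω) := ⟨m, hm⟩
      have ho : Odd ((u + P ω) + 1) := Even.add_one he
      have hno : ¬ Odd (u + P ω) := by
        rw [← Nat.not_even_iff_odd]; exact not_not_intro he
      rw [if_pos ho, if_neg hno, if_pos he]
      have hidx : ((u + P ω) + 1 + 1) / 2 = (u + P ω) / 2 + 1 := by omega
      rw [hidx]; ring
    · obtain ⟨m, hm⟩ := h
      have ho : Odd (u + P ω) := ⟨m, hm⟩
      have hne : ¬ Even (u + P ω) := by
        rw [← Nat.not_odd_iff_even]; exact not_not_intro ho
      have hno1 : ¬ Odd ((u + P ω) + 1) := by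
        intro hcon; obtain ⟨r, hr⟩ := hcon; omega
      rw [if_neg hno1, if_pos ho, if_neg hne]
      have hidx : ((u + P ω) + 1) / 2 = (u + P ω) / 2 + 1 := by omega
      rw [hidx]; ring
  -- decomposition of the product
  have hdec : ∀ (t k : ℕ) (ω : Ω), δ t ω * δ (t + k) ω =
      ({ω' | P ω' = 0}.indicator (fun ω =>
        ((if Even t then (1:ℝ) else -1) * (if Even (t + k) then 1 else -1) * s ^ 2) *
          (S (t / 2 + 1) ω * S ((t + k) / 2 + 1) ω))) ω +
      ({ω' | P ω' = 1}.indicator (fun ω =>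
        ((if Even (t + 1) then (1:ℝ) else -1) * (if Even (t + k + 1) then 1 else -1) * s ^ 2) *
          (S ((t + 1) / 2 + 1) ω * S ((t + k + 1) / 2 + 1) ω))) ω := by
    intro t k ω
    rcases hPval ω with h | h
    · rw [Set.indicator_of_mem (show ω ∈ {ω' | P ω' = 0} from h),
        Set.indicator_of_notMem (show ω ∉ {ω' | P ω' = 1} by simp [Set.mem_setOf_eq, h]),
        hδ' t ω, hδ' (t + k) ω, h]
      simp only [Nat.add_zero]
      ring
    · rw [Set.indicator_of_notMem (show ω ∉ {ω' | P ω' = 0} by simp [Set.mem_setOf_eq, h]),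
        Set.indicator_of_mem (show ω ∈ {ω' | P ω' = 1} from h),
        hδ' t ω, hδ' (t + k) ω, h]
      ring
  intro t
  constructor
  · simp only [hdec t 1]
    rw [integral_add (hIntd _ 0 _ _) (hIntd _ 1 _ _)]
    rcases Nat.even_or_odd t with he | ho
    · obtain ⟨m, hm⟩ := he
      rw [show (t + 1) / 2 = t / 2 from by omega]
      rw [hIone _ 0 _ hPunif, hIzero _ 1 _ _ (by omega)]
      have h1 : (if Even t then (1:ℝ) else -1) = 1 := if_pos ⟨m, hm⟩
      have h2 : (if Even (t + 1) then (1:ℝ) else -1) = -1 := by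
        refine if_neg ?_; intro hcon; obtain ⟨r, hr⟩ := hcon; omega
      rw [h1, h2]; ring
    · obtain ⟨m, hm⟩ := ho
      rw [show (t + 1 + 1) / 2 = (t + 1) / 2 from by omega]
      rw [hIzero _ 0 _ _ (by omega), hIone _ 1 _ hP1]
      have h1 : (if Even (t + 1) then (1:ℝ) else -1) = 1 := if_pos ⟨m + 1, by omega⟩
      have h2 : (if Even (t + 1 + 1) then (1:ℝ) else -1) = -1 := by
        refine if_neg ?_; intro hcon; obtain ⟨r, hr⟩ := hcon; omega
      rw [h1, h2]; ring
  · intro k hk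
    simp only [hdec t k]
    rw [integral_add (hIntd _ 0 _ _) (hIntd _ 1 _ _),
      hIzero _ 0 _ _ (by omega), hIzero _ 1 _ _ (by omega)]
    norm_num
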